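/- Let a₁,…,a_k, b₁,…,b_k ∈ ℝ and define h : ℝ → ℝ by h(t) = ∏_{i=1}^k (a_i t + b_i). Suppose t₀ ∈ ℝ satisfies a_i t₀ + b_i > 0 for all i, not all a_i are zero, and h′(t₀) = 0. Then h″(t₀) < 0; in particular every such critical point of h is a strict local maximum. -/

import Mathlib

/-- Let `h t = ∏ i, (a i * t + b i)` and suppose `t₀` satisfies
`a i * t₀ + b i > 0` for all `i`, not all `a i` are zero, and `h′ t₀ = 0`.
Then `h″ t₀ < 0`; in particular such a critical point is a strict local maximum. -/
theorem stmt8 (k : ℕ) (a b : Fin k → ℝ) (h : ℝ → ℝ)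
    (hh : ∀ t, h t = ∏ i, (a i * t + b i))
    (t₀ : ℝ) (hpos : ∀ i, 0 < a i * t₀ + b i) (ha : ∃ i, a i ≠ 0)
    (hcrit : deriv h t₀ = 0) :
    deriv (deriv h) t₀ < 0 := by
  classical
  have hfun : h = fun t => ∏ i, (a i * t + b i) := funext hh
  subst hfun
  set L : Fin k → ℝ := fun i => a i * t₀ + b i with hL
  have hLpos : ∀ i, 0 < L i := hpos
  have hLne : ∀ i, L i ≠ 0 := fun i => (hLpos i).ne'
  -- each factor has derivative a i at every point
  have hfac : ∀ (i : Fin k) (t : ℝ), HasDerivAt (fun t => a i * t + b i) (a i) t := by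
    intro i t
    simpa using ((hasDerivAt_id t).const_mul (a i)).add_const (b i)
  -- first derivative as a function
  have hD1 : deriv (fun t => ∏ i, (a i * t + b i)) =
      fun t => ∑ i, (∏ j ∈ Finset.univ.erase i, (a j * t + b j)) * a i := by
    funext t
    have := HasDerivAt.fun_finsetProd (u := Finset.univ)
      (f := fun i t => a i * t + b i) (f' := a) (x := t) (fun i _ => hfac i t)
    simpa [smul_eq_mul] using this.deriv
  rw [hD1]
  rw [hD1] at hcrit
  -- second derivative at t₀
  have hD2 : HasDerivAt
      (fun t => ∑ i, (∏ j ∈ Finset.univ.erase i, (a j * t + b j)) * a i)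
      (∑ i, (∑ j ∈ Finset.univ.erase i,
        (∏ m ∈ (Finset.univ.erase i).erase j, L m) * a j) * a i) t₀ := by
    apply HasDerivAt.fun_sum
    intro i _
    exact (HasDerivAt.fun_finsetProd (u := Finset.univ.erase i)
      (f := fun j t => a j * t + b j) (f' := a) (x := t₀)
      (fun j _ => hfac j t₀)).mul_const (a i) |>.congr_deriv (by simp [smul_eq_mul, hL])
  rw [hD2.deriv]
  set H : ℝ := ∏ i, L i with hHdef
  have hHpos : 0 < H := Finset.prod_pos fun i _ => hLpos i
  set s : Fin k → ℝ := fun i => a i / L i with hs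
  have hErase : ∀ i, (∏ j ∈ Finset.univ.erase i, L j) = H / L i := by
    intro i
    rw [eq_div_iff (hLne i), mul_comm]
    exact Finset.mul_prod_erase Finset.univ L (Finset.mem_univ i)
  have hErase2 : ∀ i j, j ≠ i → (∏ m ∈ (Finset.univ.erase i).erase j, L m)
      = H / (L i * L j) := by
    intro i j hij
    have hjmem : j ∈ Finset.univ.erase i := Finset.mem_erase.2 ⟨hij, Finset.mem_univ j⟩
    have h1 : L j * ∏ m ∈ (Finset.univ.erase i).erase j, L m
        = ∏ m ∈ Finset.univ.erase i, L m := Finset.mul_prod_erase _ L hjmem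
    rw [hErase i] at h1
    rw [eq_div_iff (hLne i)] at h1
    rw [eq_div_iff (mul_ne_zero (hLne i) (hLne j))]
    linear_combination h1
  -- the criticality condition gives ∑ s i = 0
  have h1 : ∑ i, H * s i = 0 := by
    rw [← hcrit]
    refine Finset.sum_congr rfl fun i _ => ?_
    have : (∏ j ∈ Finset.univ.erase i, (a j * t₀ + b j)) = H / L i := hErase i
    rw [this, hs]
    field_simp
  have hS0 : ∑ i, s i = 0 := by
    rw [← Finset.mul_sum] at h1
    exact (mul_eq_zero.1 h1).resolve_left hHpos.ne'
  -- compute the second derivative value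
  have key : ∑ i, (∑ j ∈ Finset.univ.erase i,
      (∏ m ∈ (Finset.univ.erase i).erase j, L m) * a j) * a i
      = -(H * ∑ i, s i ^ 2) := by
    have step : ∀ i : Fin k, (∑ j ∈ Finset.univ.erase i,
        (∏ m ∈ (Finset.univ.erase i).erase j, L m) * a j) * a i
        = H * (s i * ((∑ j, s j) - s i)) := by
      intro i
      have inner : ∑ j ∈ Finset.univ.erase i,
          (∏ m ∈ (Finset.univ.erase i).erase j, L m) * a j
          = ∑ j ∈ Finset.univ.erase i, (H / L i) * s j := by
        refine Finset.sum_congr rfl fun j hj => ?_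
        rw [hErase2 i j (Finset.mem_erase.1 hj).1, hs]
        field_simp
      rw [inner, ← Finset.mul_sum,
        Finset.sum_erase_eq_sub (Finset.mem_univ i), hs]
      field_simp
    calc ∑ i, (∑ j ∈ Finset.univ.erase i,
        (∏ m ∈ (Finset.univ.erase i).erase j, L m) * a j) * a i
        = ∑ i, H * (s i * ((∑ j, s j) - s i)) := Finset.sum_congr rfl fun i _ => step i
      _ = ∑ i, -(H * s i ^ 2) := by
          refine Finset.sum_congr rfl fun i _ => ?_
          rw [hS0]; ring
      _ = -(H * ∑ i, s i ^ 2) := by rw [Finset.sum_neg_distrib, ← Finset.mul_sum]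
  rw [key]
  obtain ⟨i₀, hi₀⟩ := ha
  have hsum : 0 < ∑ i, s i ^ 2 := by
    refine Finset.sum_pos' (fun i _ => sq_nonneg _) ⟨i₀, Finset.mem_univ i₀, ?_⟩
    have : s i₀ ≠ 0 := div_ne_zero hi₀ (hLne i₀)
    positivity
  have := mul_pos hHpos hsum
  linarith
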